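/- arXiv:1710.09606 — 2 statements merged into one kernel-verified Lean document; each statement's English description precedes it below -/
import Mathlib

section
/- Let Ω ⊆ 𝔽ⁿ be a finitely generated P-closed set and let G ⊆ Ω. Then Ω = Ḡ if and only if the left 𝔽-vector spaces Im(E_Ω) and Im(E_G) have the same (finite) dimension, where E_Ω : R → 𝔽^Ω and E_G : R → 𝔽^G are the evaluation maps. -/
/- Common setup: free multivariate skew polynomial rings over a division ring. -/

open Matrix Finsupp

/-- The underlying left `𝔽`-module of the free multivariate skew polynomial ring:
the free left `𝔽`-module with basis the free monoid on `n` symbols. -/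
abbrev SkewPoly (𝔽 : Type*) [DivisionRing 𝔽] (n : ℕ) : Type _ := FreeMonoid (Fin n) →₀ 𝔽

namespace SkewPoly

variable {𝔽 : Type*} [DivisionRing 𝔽] {n : ℕ}

/-- The variable `xᵢ` as a skew polynomial. -/
noncomputable def X (𝔽 : Type*) [DivisionRing 𝔽] {n : ℕ} (i : Fin n) : SkewPoly 𝔽 n :=
  Finsupp.single (FreeMonoid.of i) 1

/-- The constant `a` as a skew polynomial (coefficient on the empty word). -/
noncomputable def C {𝔽 : Type*} [DivisionRing 𝔽] (n : ℕ) (a : 𝔽) :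
    SkewPoly 𝔽 n := Finsupp.single 1 a

/-- The degree of a skew polynomial: the maximal length of a word in its support
(`⊥` for the zero polynomial). -/
noncomputable def deg (F : SkewPoly 𝔽 n) : WithBot ℕ :=
  F.support.sup fun m => ((FreeMonoid.length m : ℕ) : WithBot ℕ)

/-- A matrix morphism `σ : 𝔽 → Mₙ(𝔽)`: a unital ring homomorphism. -/
def IsMatrixMorphism (σ : 𝔽 → Matrix (Fin n) (Fin n) 𝔽) : Prop :=
  σ 1 = 1 ∧ (∀ a b : 𝔽, σ (a + b) = σ a + σ b) ∧ (∀ a b : 𝔽, σ (a * b) = σ a * σ b)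

/-- A `σ`-vector derivation `δ : 𝔽 → 𝔽ⁿ`: additive with `δ(ab) = σ(a)δ(b) + δ(a)b`. -/
def IsVectorDerivation (σ : 𝔽 → Matrix (Fin n) (Fin n) 𝔽) (δ : 𝔽 → Fin n → 𝔽) : Prop :=
  (∀ a b : 𝔽, δ (a + b) = δ a + δ b) ∧
    (∀ a b : 𝔽, δ (a * b) = σ a *ᵥ δ b + fun i => δ a i * b)

/-- A multiplication on the free module `SkewPoly 𝔽 n` making it a ring (with the
existing addition) whose identity is the empty word, which restricts to concatenation
on monomials, is additive on degrees of nonzero elements, and for which left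
multiplication by constants is scalar multiplication. -/
structure RawMul (𝔽 : Type*) [DivisionRing 𝔽] (n : ℕ) where
  /-- the multiplication -/
  mul : SkewPoly 𝔽 n → SkewPoly 𝔽 n → SkewPoly 𝔽 n
  mul_add : ∀ F G H : SkewPoly 𝔽 n, mul F (G + H) = mul F G + mul F H
  add_mul : ∀ F G H : SkewPoly 𝔽 n, mul (F + G) H = mul F H + mul G H
  mul_assoc : ∀ F G H : SkewPoly 𝔽 n, mul (mul F G) H = mul F (mul G H)
  one_mul : ∀ F : SkewPoly 𝔽 n, mul (C n 1) F = F
  mul_one : ∀ F : SkewPoly 𝔽 n, mul F (C n 1) = F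
  mono_mul_mono : ∀ m m' : FreeMonoid (Fin n),
    mul (Finsupp.single m 1) (Finsupp.single m' 1) = Finsupp.single (m * m') 1
  const_mul : ∀ (a : 𝔽) (F : SkewPoly 𝔽 n), mul (C n a) F = a • F
  deg_mul : ∀ F G : SkewPoly 𝔽 n, F ≠ 0 → G ≠ 0 → deg (mul F G) = deg F + deg G

/-- The multiplication `S` satisfies the commutation rule
`xᵢ a = Σⱼ σ_{i,j}(a) xⱼ + δᵢ(a)`. -/
def HasCommRule (S : RawMul 𝔽 n) (σ : 𝔽 → Matrix (Fin n) (Fin n) 𝔽)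
    (δ : 𝔽 → Fin n → 𝔽) : Prop :=
  ∀ (i : Fin n) (a : 𝔽),
    S.mul (X 𝔽 i) (C n a) =
      (∑ j : Fin n, Finsupp.single (FreeMonoid.of j) (σ a i j)) + C n (δ a i)

/-- `F = Σᵢ Gᵢ (xᵢ - aᵢ) + b`, i.e. `b` is a remainder of `F` upon right division
by `x₁ - a₁, …, xₙ - aₙ`; equivalently `F - b` lies in the left ideal generated by
the `xᵢ - aᵢ`. -/
def Decomposes (S : RawMul 𝔽 n) (a : Fin n → 𝔽) (F : SkewPoly 𝔽 n) (b : 𝔽) : Prop :=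
  ∃ G : Fin n → SkewPoly 𝔽 n,
    F = (∑ i : Fin n, S.mul (G i) (X 𝔽 i - C n (a i))) + C n b

/-- The evaluation of `F` at the point `a`: the unique `b ∈ 𝔽` such that `F - b`
lies in the left ideal generated by `x₁ - a₁, …, xₙ - aₙ`. -/
noncomputable def eval (S : RawMul 𝔽 n) (a : Fin n → 𝔽) (F : SkewPoly 𝔽 n) : 𝔽 :=
  letI := Classical.propDecidable (∃ b : 𝔽, Decomposes S a F b)
  if h : ∃ b : 𝔽, Decomposes S a F b then h.choose else 0

/-- The `(σ,δ)`-conjugate `a^c = σ(c) a c⁻¹ + δ(c) c⁻¹` of `a` with respect to `c`. -/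
noncomputable def conj (σ : 𝔽 → Matrix (Fin n) (Fin n) 𝔽) (δ : 𝔽 → Fin n → 𝔽)
    (a : Fin n → 𝔽) (c : 𝔽) : Fin n → 𝔽 :=
  fun i => (σ c *ᵥ a) i * c⁻¹ + δ c i * c⁻¹

/-- `I(Ω)`: the set of skew polynomials vanishing at every point of `Ω`. -/
def zeroIdeal (S : RawMul 𝔽 n) (Ω : Set (Fin n → 𝔽)) : Set (SkewPoly 𝔽 n) :=
  {F | ∀ a ∈ Ω, eval S a F = 0}

/-- The left ideal of `SkewPoly 𝔽 n` generated by `x₁ - a₁, …, xₙ - aₙ`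
(the set of sums of left multiples of the generators). -/
def pointIdeal (S : RawMul 𝔽 n) (a : Fin n → 𝔽) : Set (SkewPoly 𝔽 n) :=
  {F | ∃ G : Fin n → SkewPoly 𝔽 n, F = ∑ i : Fin n, S.mul (G i) (X 𝔽 i - C n (a i))}

/-- The P-closure `Ω̄ = Z(I(Ω))` of a set of points `Ω`. -/
def pClosure (S : RawMul 𝔽 n) (Ω : Set (Fin n → 𝔽)) : Set (Fin n → 𝔽) :=
  {a | ∀ F ∈ zeroIdeal S Ω, eval S a F = 0}

/-- `Ω` is P-closed if it equals its P-closure. -/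
def IsPClosed (S : RawMul 𝔽 n) (Ω : Set (Fin n → 𝔽)) : Prop := pClosure S Ω = Ω

/-- `B` is P-independent: no point of `B` lies in the P-closure of the rest. -/
def PIndep (S : RawMul 𝔽 n) (B : Set (Fin n → 𝔽)) : Prop :=
  ∀ a ∈ B, a ∉ pClosure S (B \ {a})

/-- `B` is a P-basis of `Ω`: a P-independent subset of `Ω` whose P-closure is `Ω`. -/
def IsPBasis (S : RawMul 𝔽 n) (B Ω : Set (Fin n → 𝔽)) : Prop :=
  B ⊆ Ω ∧ PIndep S B ∧ pClosure S B = Ω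

/-- `Ω` is finitely generated: it is the P-closure of a finite subset of itself. -/
def FinGen (S : RawMul 𝔽 n) (Ω : Set (Fin n → 𝔽)) : Prop :=
  ∃ G : Set (Fin n → 𝔽), G.Finite ∧ G ⊆ Ω ∧ pClosure S G = Ω

/-- The rank of a P-closed set: the (common) cardinality of its P-bases. -/
noncomputable def pRank (S : RawMul 𝔽 n) (Ω : Set (Fin n → 𝔽)) : ℕ :=
  sInf {k : ℕ | ∃ B : Finset (Fin n → 𝔽), IsPBasis S ↑B Ω ∧ B.card = k}

/-- The image of the evaluation map `E_Ω : R → 𝔽^Ω`, as a left `𝔽`-subspace of `𝔽^Ω`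
(the span of the image; the image is itself a subspace since evaluation is left linear). -/
noncomputable def evalSpan (S : RawMul 𝔽 n) (Ω : Set (Fin n → 𝔽)) :
    Submodule 𝔽 (↥Ω → 𝔽) :=
  Submodule.span 𝔽 (Set.range fun F : SkewPoly 𝔽 n => fun a : ↥Ω => eval S ↑a F)

/-- `I` is a two-sided ideal with respect to the multiplication `S`. -/
def IsTwoSidedIdealSet (S : RawMul 𝔽 n) (I : Set (SkewPoly 𝔽 n)) : Prop :=
  (0 : SkewPoly 𝔽 n) ∈ I ∧ (∀ F ∈ I, ∀ G ∈ I, F + G ∈ I) ∧ (∀ F ∈ I, -F ∈ I) ∧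
    (∀ F ∈ I, ∀ G : SkewPoly 𝔽 n, S.mul G F ∈ I) ∧
    (∀ F ∈ I, ∀ G : SkewPoly 𝔽 n, S.mul F G ∈ I)


/-- The left row-rank of the skew Vandermonde matrix `V_d(G)`: the dimension of the
left `𝔽`-span of its rows `(N_m(c))_{c ∈ G}`, indexed by the words `m` of length `< d`,
where `N_m(c)` is the evaluation of the monomial `m` at the point `c`. -/
noncomputable def vandermondeRank (S : RawMul 𝔽 n) (G : Finset (Fin n → 𝔽)) (d : ℕ) :
    Cardinal :=
  Module.rank 𝔽 ↥(Submodule.span 𝔽 (Set.range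
    fun m : {m : FreeMonoid (Fin n) // FreeMonoid.length m < d} =>
      fun c : ↥G => eval S ↑c (Finsupp.single (m : FreeMonoid (Fin n)) (1 : 𝔽))))

end SkewPoly

namespace SkewPoly

variable {𝔽 : Type*} [DivisionRing 𝔽] {n : ℕ} (S : RawMul 𝔽 n)

lemma mul_zero' (F : SkewPoly 𝔽 n) : S.mul F 0 = 0 := by
  have h := S.mul_add F 0 0
  rw [add_zero] at h
  exact (left_eq_add.1 h)

lemma zero_mul' (F : SkewPoly 𝔽 n) : S.mul 0 F = 0 := by
  have h := S.add_mul 0 0 F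
  rw [add_zero] at h
  exact (left_eq_add.1 h)

lemma mul_neg' (F G : SkewPoly 𝔽 n) : S.mul F (-G) = -(S.mul F G) := by
  have h := S.mul_add F G (-G)
  rw [add_neg_cancel, mul_zero' S] at h
  exact (eq_neg_of_add_eq_zero_right h.symm)

lemma neg_mul' (F G : SkewPoly 𝔽 n) : S.mul (-F) G = -(S.mul F G) := by
  have h := S.add_mul F (-F) G
  rw [add_neg_cancel, zero_mul' S] at h
  exact (eq_neg_of_add_eq_zero_right h.symm)

lemma mul_sub' (F G H : SkewPoly 𝔽 n) : S.mul F (G - H) = S.mul F G - S.mul F H := by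
  rw [sub_eq_add_neg, S.mul_add, mul_neg' S, sub_eq_add_neg]

lemma sub_mul' (F G H : SkewPoly 𝔽 n) : S.mul (F - G) H = S.mul F H - S.mul G H := by
  rw [sub_eq_add_neg, S.add_mul, neg_mul' S, sub_eq_add_neg]

lemma smul_mul' (c : 𝔽) (F G : SkewPoly 𝔽 n) : S.mul (c • F) G = c • S.mul F G := by
  rw [← S.const_mul c F, S.mul_assoc, S.const_mul]

lemma mul_sum' {ι : Type*} (F : SkewPoly 𝔽 n) (s : Finset ι) (H : ι → SkewPoly 𝔽 n) :
    S.mul F (∑ i ∈ s, H i) = ∑ i ∈ s, S.mul F (H i) := by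
  classical
  induction s using Finset.induction with
  | empty => simp [mul_zero' S]
  | insert x s' hx ih => rw [Finset.sum_insert hx, Finset.sum_insert hx, S.mul_add, ih]

lemma mul_single_one (F : SkewPoly 𝔽 n) (m' : FreeMonoid (Fin n)) :
    S.mul F (Finsupp.single m' 1) = Finsupp.mapDomain (· * m') F := by
  induction F using Finsupp.induction with
  | zero => rw [zero_mul' S, Finsupp.mapDomain_zero]
  | single_add m c F hm hc ih =>
    rw [S.add_mul, ih, Finsupp.mapDomain_add, Finsupp.mapDomain_single]
    congr 1
    have h1 : (Finsupp.single m c : SkewPoly 𝔽 n) = c • Finsupp.single m 1 := by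
      rw [Finsupp.smul_single, smul_eq_mul, mul_one]
    rw [h1, smul_mul' S, S.mono_mul_mono, Finsupp.smul_single, smul_eq_mul, mul_one]

lemma length_le_deg {F : SkewPoly 𝔽 n} {m : FreeMonoid (Fin n)} (h : m ∈ F.support) :
    ((FreeMonoid.length m : ℕ) : WithBot ℕ) ≤ deg F :=
  Finset.le_sup (f := fun m => ((FreeMonoid.length m : ℕ) : WithBot ℕ)) h

lemma deg_le_nat {F : SkewPoly 𝔽 n} {d : ℕ}
    (h : ∀ m ∈ F.support, FreeMonoid.length m ≤ d) : deg F ≤ (d : WithBot ℕ) :=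
  Finset.sup_le fun m hm => by exact_mod_cast h m hm

lemma deg_mul_C_le (F : SkewPoly 𝔽 n) (a : 𝔽) : deg (S.mul F (C n a)) ≤ deg F := by
  rcases eq_or_ne a 0 with rfl | ha
  · rw [show C n (0 : 𝔽) = 0 from Finsupp.single_zero 1, mul_zero' S]
    simp [deg]
  rcases eq_or_ne F 0 with rfl | hF
  · rw [zero_mul' S]
  · have hC : C n a ≠ 0 := by
      simpa [C, Finsupp.single_eq_zero] using ha
    rw [S.deg_mul F (C n a) hF hC]
    have hdC : deg (C n a) = (0 : WithBot ℕ) := by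
      rw [deg, C, Finsupp.support_single_ne_zero _ ha]
      simp [FreeMonoid.length_one]
    rw [hdC, add_zero]

lemma coeff_mul_X (F : SkewPoly 𝔽 n) (i : Fin n) (m : FreeMonoid (Fin n)) :
    (S.mul F (X 𝔽 i)) (m * FreeMonoid.of i) = F m := by
  rw [X, mul_single_one S]
  exact Finsupp.mapDomain_apply (fun a b h => mul_right_cancel h) F m

lemma coeff_mul_X_ne (F : SkewPoly 𝔽 n) {i j : Fin n} (hij : j ≠ i) (m : FreeMonoid (Fin n)) :
    (S.mul F (X 𝔽 j)) (m * FreeMonoid.of i) = 0 := by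
  rw [X, mul_single_one S]
  refine Finsupp.mapDomain_notin_range _ _ ?_
  rintro ⟨m', hm'⟩
  have h2 := congrArg (fun w => (FreeMonoid.toList w).getLast?) hm'
  simp only [FreeMonoid.toList_mul, FreeMonoid.toList_of, List.getLast?_concat] at h2
  exact hij (Option.some_injective _ h2)

lemma eq_zero_of_sum_mul (a : Fin n → 𝔽) :
    ∀ (d : ℕ) (G : Fin n → SkewPoly 𝔽 n) (b : 𝔽),
      (∀ i, ∀ m ∈ (G i).support, FreeMonoid.length m < d) →
      (∑ i : Fin n, S.mul (G i) (X 𝔽 i - C n (a i))) = C n b → ∀ i, G i = 0 := by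
  intro d
  induction d with
  | zero =>
    intro G b hd _ i
    ext m
    by_contra hc
    exact absurd (hd i m (Finsupp.mem_support_iff.2 hc)) (by omega)
  | succ d ih =>
    intro G b hd hsum
    have hstep : ∀ i, ∀ m ∈ (G i).support, FreeMonoid.length m < d := by
      intro i m hm
      have hle : FreeMonoid.length m ≤ d := Nat.lt_succ_iff.1 (hd i m hm)
      rcases lt_or_eq_of_le hle with h | h
      · exact h
      exfalso
      set w := m * FreeMonoid.of i with hw
      have hlenw : FreeMonoid.length w = d + 1 := by
        rw [hw, FreeMonoid.length_mul, FreeMonoid.length_of, h]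
      have hrhs : (C n b) w = 0 := by
        rw [C]
        refine Finsupp.single_eq_of_ne fun h1 => ?_
        have h3 := congrArg FreeMonoid.length h1
        rw [FreeMonoid.length_one, hlenw] at h3
        omega
      have hGd : ∀ j, deg (G j) ≤ (d : WithBot ℕ) :=
        fun j => deg_le_nat fun m' hm' => Nat.lt_succ_iff.1 (hd j m' hm')
      have hterm0 : ∀ j, (S.mul (G j) (C n (a j))) w = 0 := by
        intro j
        by_contra hne
        have hmem : w ∈ (S.mul (G j) (C n (a j))).support := Finsupp.mem_support_iff.2 hne
        have h1 : ((FreeMonoid.length w : ℕ) : WithBot ℕ) ≤ (d : WithBot ℕ) :=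
          le_trans (length_le_deg hmem) (le_trans (deg_mul_C_le S _ _) (hGd j))
        rw [hlenw] at h1
        have h2 : d + 1 ≤ d := by exact_mod_cast h1
        omega
      have hcoef := congrArg (fun F : SkewPoly 𝔽 n => F w) hsum
      simp only [Finsupp.finset_sum_apply] at hcoef
      rw [hrhs] at hcoef
      have hterms : ∀ j : Fin n, (S.mul (G j) (X 𝔽 j - C n (a j))) w
          = (S.mul (G j) (X 𝔽 j)) w - (S.mul (G j) (C n (a j))) w := by
        intro j
        rw [mul_sub' S, Finsupp.sub_apply]
      rw [Finset.sum_congr rfl (fun j _ => hterms j)] at hcoef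
      rw [Finset.sum_eq_single i
        (fun j _ hji => by rw [hw, coeff_mul_X_ne S (G j) hji, hterm0 j, sub_zero])
        (fun hni => absurd (Finset.mem_univ i) hni)] at hcoef
      rw [hw, coeff_mul_X S, hterm0 i, sub_zero] at hcoef
      exact (Finsupp.mem_support_iff.1 hm) hcoef
    exact ih G b hstep hsum

lemma const_eq_zero_of_sum_mul (a : Fin n → 𝔽) (G : Fin n → SkewPoly 𝔽 n) (b : 𝔽)
    (h : ∑ i : Fin n, S.mul (G i) (X 𝔽 i - C n (a i)) = C n b) : b = 0 := by
  classical
  have hd : ∀ i, ∀ m ∈ (G i).support, FreeMonoid.length m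
      < (Finset.univ.sup fun i : Fin n => (G i).support.sup fun m => FreeMonoid.length m) + 1 := by
    intro i m hm
    have h1 : FreeMonoid.length m ≤ (G i).support.sup fun m => FreeMonoid.length m :=
      Finset.le_sup hm
    have h2 : ((G i).support.sup fun m => FreeMonoid.length m)
        ≤ Finset.univ.sup fun i : Fin n => (G i).support.sup fun m => FreeMonoid.length m :=
      Finset.le_sup (f := fun i : Fin n => (G i).support.sup fun m => FreeMonoid.length m)
        (Finset.mem_univ i)
    omega
  have hG0 := eq_zero_of_sum_mul S a _ G b hd h
  rw [Finset.sum_eq_zero (fun i _ => by rw [hG0 i, zero_mul' S])] at h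
  exact Finsupp.single_eq_zero.1 h.symm

lemma decomposes_unique {a : Fin n → 𝔽} {F : SkewPoly 𝔽 n} {b b' : 𝔽}
    (h : Decomposes S a F b) (h' : Decomposes S a F b') : b = b' := by
  obtain ⟨G, hG⟩ := h
  obtain ⟨G', hG'⟩ := h'
  have heq := hG.symm.trans hG'
  have key : (∑ i : Fin n, S.mul (G i - G' i) (X 𝔽 i - C n (a i))) = C n (b' - b) := by
    simp only [sub_mul' S]
    rw [Finset.sum_sub_distrib, show C n (b' - b) = C n b' - C n b from Finsupp.single_sub 1 b' b,
      sub_eq_sub_iff_add_eq_add, add_comm (C n b') (∑ i : Fin n, S.mul (G' i) (X 𝔽 i - C n (a i)))]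
    exact heq
  have hz := const_eq_zero_of_sum_mul S a _ _ key
  exact (sub_eq_zero.1 hz).symm

lemma decomposes_zero (a : Fin n → 𝔽) : Decomposes S a 0 0 := by
  refine ⟨0, ?_⟩
  simp [zero_mul' S, C]

lemma decomposes_add {a : Fin n → 𝔽} {F F' : SkewPoly 𝔽 n} {b b' : 𝔽}
    (h : Decomposes S a F b) (h' : Decomposes S a F' b') :
    Decomposes S a (F + F') (b + b') := by
  obtain ⟨G, hG⟩ := h
  obtain ⟨G', hG'⟩ := h'
  refine ⟨fun i => G i + G' i, ?_⟩
  rw [hG, hG']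
  simp only [S.add_mul]
  rw [Finset.sum_add_distrib, show C n (b + b') = C n b + C n b' from Finsupp.single_add 1 b b']
  abel

lemma decomposes_smul {a : Fin n → 𝔽} {F : SkewPoly 𝔽 n} {b : 𝔽} (c : 𝔽)
    (h : Decomposes S a F b) : Decomposes S a (c • F) (c * b) := by
  obtain ⟨G, hG⟩ := h
  refine ⟨fun i => S.mul (C n c) (G i), ?_⟩
  rw [hG, smul_add, Finset.smul_sum]
  congr 1
  · refine Finset.sum_congr rfl fun i _ => ?_
    rw [← S.const_mul c (S.mul (G i) _), ← S.mul_assoc]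
  · rw [C, Finsupp.smul_single, smul_eq_mul]
    rfl

variable (σ : 𝔽 → Matrix (Fin n) (Fin n) 𝔽) (δ : 𝔽 → Fin n → 𝔽)

lemma decomposes_single (hS : HasCommRule S σ δ) (a : Fin n → 𝔽) (m : FreeMonoid (Fin n)) :
    ∃ b, Decomposes S a (Finsupp.single m 1) b := by
  induction m using FreeMonoid.recOn with
  | one =>
    refine ⟨1, 0, ?_⟩
    simp [zero_mul' S, C]
  | of_mul i m ihm =>
    obtain ⟨b, G0, hG0⟩ := ihm
    refine ⟨∑ j, σ b i j * a j + δ b i, fun j => S.mul (X 𝔽 i) (G0 j) + C n (σ b i j), ?_⟩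
    have hmono : (Finsupp.single (FreeMonoid.of i * m) 1 : SkewPoly 𝔽 n)
        = S.mul (X 𝔽 i) (Finsupp.single m 1) := by
      rw [X, S.mono_mul_mono]
    rw [hmono, hG0, S.mul_add, mul_sum' S, hS i b]
    simp only [S.add_mul]
    rw [Finset.sum_add_distrib]
    have h1 : ∀ j, S.mul (X 𝔽 i) (S.mul (G0 j) (X 𝔽 j - C n (a j)))
        = S.mul (S.mul (X 𝔽 i) (G0 j)) (X 𝔽 j - C n (a j)) := fun j => (S.mul_assoc _ _ _).symm
    have h2 : ∀ j, S.mul (C n (σ b i j)) (X 𝔽 j - C n (a j))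
        = Finsupp.single (FreeMonoid.of j) (σ b i j)
          - Finsupp.single (1 : FreeMonoid (Fin n)) (σ b i j * a j) := by
      intro j
      rw [S.const_mul, smul_sub, X, Finsupp.smul_single, smul_eq_mul, mul_one, C,
        Finsupp.smul_single, smul_eq_mul]
    simp only [h1, h2]
    rw [show C n (∑ j, σ b i j * a j + δ b i)
        = (∑ j, Finsupp.single (1 : FreeMonoid (Fin n)) (σ b i j * a j)) + C n (δ b i) by
      rw [C, Finsupp.single_add, Finsupp.single_finset_sum]
      rfl]
    rw [Finset.sum_sub_distrib]
    abel

lemma decomposes_exists (hS : HasCommRule S σ δ) (a : Fin n → 𝔽) (F : SkewPoly 𝔽 n) :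
    ∃ b, Decomposes S a F b := by
  induction F using Finsupp.induction with
  | zero => exact ⟨0, decomposes_zero S a⟩
  | single_add m c F hm hc ih =>
    obtain ⟨b, hb⟩ := ih
    obtain ⟨b', hb'⟩ := decomposes_single S σ δ hS a m
    refine ⟨c * b' + b, ?_⟩
    have h3 := decomposes_add S (decomposes_smul S c hb') hb
    have hsm : c • (Finsupp.single m (1 : 𝔽)) = Finsupp.single m c := by
      rw [Finsupp.smul_single, smul_eq_mul, mul_one]
    rwa [hsm] at h3

lemma eval_eq_of (a : Fin n → 𝔽) {F : SkewPoly 𝔽 n} {b : 𝔽} (h : Decomposes S a F b) :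
    eval S a F = b := by
  rw [eval]
  rw [dif_pos ⟨b, h⟩]
  exact decomposes_unique S (Exists.choose_spec (⟨b, h⟩ : ∃ b, Decomposes S a F b)) h

lemma eval_add (hS : HasCommRule S σ δ) (a : Fin n → 𝔽) (F F' : SkewPoly 𝔽 n) :
    eval S a (F + F') = eval S a F + eval S a F' := by
  obtain ⟨b, hb⟩ := decomposes_exists S σ δ hS a F
  obtain ⟨b', hb'⟩ := decomposes_exists S σ δ hS a F'
  rw [eval_eq_of S a hb, eval_eq_of S a hb', eval_eq_of S a (decomposes_add S hb hb')]

lemma eval_smul (hS : HasCommRule S σ δ) (a : Fin n → 𝔽) (c : 𝔽) (F : SkewPoly 𝔽 n) :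
    eval S a (c • F) = c * eval S a F := by
  obtain ⟨b, hb⟩ := decomposes_exists S σ δ hS a F
  rw [eval_eq_of S a hb, eval_eq_of S a (decomposes_smul S c hb)]

/-- The evaluation map as an `𝔽`-linear map. -/
noncomputable def evalMap (hS : HasCommRule S σ δ) (A : Set (Fin n → 𝔽)) :
    SkewPoly 𝔽 n →ₗ[𝔽] (↥A → 𝔽) where
  toFun F := fun a => eval S (↑a) F
  map_add' F F' := funext fun a => eval_add S σ δ hS (↑a) F F'
  map_smul' c F := funext fun a => eval_smul S σ δ hS (↑a) c F

lemma evalSpan_eq (hS : HasCommRule S σ δ) (A : Set (Fin n → 𝔽)) :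
    evalSpan S A = LinearMap.range (evalMap S σ δ hS A) := by
  have h : (Set.range fun F : SkewPoly 𝔽 n => fun a : ↥A => eval S (↑a) F)
      = ↑(LinearMap.range (evalMap S σ δ hS A)) := by
    rw [LinearMap.coe_range]
    rfl
  rw [evalSpan, h, Submodule.span_eq]

lemma mem_ker_evalMap (hS : HasCommRule S σ δ) (A : Set (Fin n → 𝔽)) (F : SkewPoly 𝔽 n) :
    F ∈ LinearMap.ker (evalMap S σ δ hS A) ↔ F ∈ zeroIdeal S A := by
  constructor
  · intro h a ha
    have h4 := congrFun (LinearMap.mem_ker.1 h) ⟨a, ha⟩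
    simpa [evalMap] using h4
  · intro h
    apply LinearMap.mem_ker.2
    funext a0
    exact h (↑a0) a0.2

lemma rank_evalSpan_eq (hS : HasCommRule S σ δ) {A B : Set (Fin n → 𝔽)}
    (h : zeroIdeal S A = zeroIdeal S B) :
    Module.rank 𝔽 ↥(evalSpan S A) = Module.rank 𝔽 ↥(evalSpan S B) := by
  have hker : LinearMap.ker (evalMap S σ δ hS A) = LinearMap.ker (evalMap S σ δ hS B) := by
    ext F
    rw [mem_ker_evalMap, mem_ker_evalMap, h]
  rw [evalSpan_eq S σ δ hS, evalSpan_eq S σ δ hS,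
    ← LinearEquiv.rank_eq (LinearMap.quotKerEquivRange (evalMap S σ δ hS A)),
    ← LinearEquiv.rank_eq (LinearMap.quotKerEquivRange (evalMap S σ δ hS B)), hker]

lemma zeroIdeal_pClosure (A : Set (Fin n → 𝔽)) :
    zeroIdeal S (pClosure S A) = zeroIdeal S A := by
  ext F
  constructor
  · intro h a ha
    exact h a fun F' hF' => hF' a ha
  · intro h a ha
    exact ha F h

end SkewPoly


open SkewPoly

set_option synthInstance.maxHeartbeats 1000000 in
set_option maxHeartbeats 1000000 in
/-- For `G ⊆ Ω` with `Ω` finitely generated and P-closed: `Ω = Ḡ` iff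
the images of the evaluation maps `E_Ω` and `E_G` have the same (finite) dimension. -/
theorem stmt15 {𝔽 : Type*} [DivisionRing 𝔽] {n : ℕ} (hn : 0 < n)
    (σ : 𝔽 → Matrix (Fin n) (Fin n) 𝔽) (δ : 𝔽 → Fin n → 𝔽)
    (hσ : IsMatrixMorphism σ) (hδ : IsVectorDerivation σ δ)
    (S : RawMul 𝔽 n) (hS : HasCommRule S σ δ)
    (Ω G : Set (Fin n → 𝔽)) (hΩ : IsPClosed S Ω) (hfg : FinGen S Ω) (hG : G ⊆ Ω) :
    Module.rank 𝔽 ↥(evalSpan S Ω) < Cardinal.aleph0 ∧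
    (pClosure S G = Ω ↔
      Module.rank 𝔽 ↥(evalSpan S Ω) = Module.rank 𝔽 ↥(evalSpan S G)) := by
  classical
  obtain ⟨G₀, hG₀fin, hG₀sub, hG₀cl⟩ := hfg
  haveI := hG₀fin.to_subtype
  have hIΩ : zeroIdeal S Ω = zeroIdeal S G₀ := by
    rw [← hG₀cl, zeroIdeal_pClosure]
  have hfin : Module.rank 𝔽 ↥(evalSpan S Ω) < Cardinal.aleph0 := by
    rw [rank_evalSpan_eq S σ δ hS hIΩ]
    exact lt_of_le_of_lt (Submodule.rank_le _) (Module.rank_lt_aleph0 𝔽 (↥G₀ → 𝔽))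
  refine ⟨hfin, ?_, ?_⟩
  · intro h
    exact rank_evalSpan_eq S σ δ hS (by rw [← h, zeroIdeal_pClosure])
  · intro h
    have hsub : zeroIdeal S Ω ⊆ zeroIdeal S G := fun F hF a ha => hF a (hG ha)
    have hsup : zeroIdeal S G ⊆ zeroIdeal S Ω := by
      set EΩ := evalMap S σ δ hS Ω with hEΩ
      set EG := evalMap S σ δ hS G with hEG
      set res : (↥Ω → 𝔽) →ₗ[𝔽] (↥G → 𝔽) := LinearMap.funLeft 𝔽 𝔽 (Set.inclusion hG) with hres
      have hcomp : res ∘ₗ EΩ = EG := by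
        ext F
        rfl
      set f : ↥(LinearMap.range EΩ) →ₗ[𝔽] (↥G → 𝔽) := res ∘ₗ (LinearMap.range EΩ).subtype
        with hf
      have hrange : LinearMap.range f = LinearMap.range EG := by
        rw [hf, LinearMap.range_comp, Submodule.range_subtype, ← LinearMap.range_comp, hcomp]
      have hrn := LinearMap.rank_range_add_rank_ker f
      rw [hrange] at hrn
      have hΩG : Module.rank 𝔽 ↥(LinearMap.range EΩ) = Module.rank 𝔽 ↥(LinearMap.range EG) := by
        rw [← evalSpan_eq S σ δ hS, ← evalSpan_eq S σ δ hS]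
        exact h
      rw [hΩG] at hrn
      have hfinG : Module.rank 𝔽 ↥(LinearMap.range EG) < Cardinal.aleph0 := by
        rw [← evalSpan_eq S σ δ hS, ← h]
        exact hfin
      have hker0 : Module.rank 𝔽 ↥(LinearMap.ker f) = 0 :=
        Cardinal.eq_of_add_eq_add_left (by rw [add_zero]; exact hrn) hfinG
      haveI hsing : Subsingleton ↥(LinearMap.ker f) := rank_zero_iff.1 hker0
      have hkerbot : LinearMap.ker f = ⊥ := Submodule.eq_bot_of_subsingleton
      intro F hF
      have hEGF : EG F = 0 := by
        funext a
        exact hF (↑a) a.2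
      have hres0 : res (EΩ F) = 0 := by
        rw [← hcomp] at hEGF
        exact hEGF
      have hvmem : (⟨EΩ F, LinearMap.mem_range_self EΩ F⟩ : ↥(LinearMap.range EΩ))
          ∈ LinearMap.ker f := by
        rw [LinearMap.mem_ker]
        exact hres0
      rw [hkerbot, Submodule.mem_bot] at hvmem
      have hE0 : EΩ F = 0 := by
        simpa [Subtype.ext_iff] using hvmem
      intro a ha
      exact congrFun hE0 ⟨a, ha⟩
    have hI : zeroIdeal S G = zeroIdeal S Ω := Set.Subset.antisymm hsup hsub
    have hPC : pClosure S G = pClosure S Ω := by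
      rw [pClosure, pClosure, hI]
    exact hPC.trans hΩ
end

section
/- Let G ⊆ 𝔽ⁿ be a finite set with M elements and let Ω = Ḡ be its P-closure. Then the dimension of the left 𝔽-span of the rows of the skew Vandermonde matrix V_M(G) equals Rk(Ω). Moreover, a subset B ⊆ G is a P-basis of Ω if and only if |B| = Rk(Ω) and the left row-rank of V_{|B|}(B) equals |B|. -/
/- Common setup: free multivariate skew polynomial rings over a division ring. -/

open Matrix Finsupp

open SkewPoly

namespace Stmt19Aux

open FreeMonoid

variable {𝔽 : Type*} [DivisionRing 𝔽] {n : ℕ}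

section Defs

variable (σ : 𝔽 → Matrix (Fin n) (Fin n) 𝔽) (δ : 𝔽 → Fin n → 𝔽)

/-- The "one-step" map `Ψᵢᵃ(b) = Σₖ σ(b)_{i,k} aₖ + δᵢ(b)`. -/
def psi (a : Fin n → 𝔽) (i : Fin n) (b : 𝔽) : 𝔽 :=
  (∑ k, σ b i k * a k) + δ b i

/-- The fundamental function `N_m(a)`, by recursion on the word. -/
def Nm (a : Fin n → 𝔽) (m : FreeMonoid (Fin n)) : 𝔽 :=
  (FreeMonoid.toList m).foldr (fun i b => psi σ δ a i b) 1

/-- The explicit evaluation functional at `a`: the left-linear extension of `N_·(a)`. -/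
noncomputable def evm (a : Fin n → 𝔽) : SkewPoly 𝔽 n →ₗ[𝔽] 𝔽 :=
  Finsupp.linearCombination 𝔽 (Nm σ δ a)

end Defs

variable {σ : 𝔽 → Matrix (Fin n) (Fin n) 𝔽} {δ : 𝔽 → Fin n → 𝔽} {S : RawMul 𝔽 n}

lemma Nm_one (a : Fin n → 𝔽) : Nm σ δ a 1 = 1 := rfl

lemma Nm_of_mul (a : Fin n → 𝔽) (i : Fin n) (m : FreeMonoid (Fin n)) :
    Nm σ δ a (FreeMonoid.of i * m) = psi σ δ a i (Nm σ δ a m) := rfl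

lemma evm_single (a : Fin n → 𝔽) (m : FreeMonoid (Fin n)) (c : 𝔽) :
    evm σ δ a (Finsupp.single m c) = c * Nm σ δ a m := by
  simp [evm, Finsupp.linearCombination_single, smul_eq_mul]

lemma evm_C (a : Fin n → 𝔽) (c : 𝔽) : evm σ δ a (C n c) = c := by
  simp [C, evm_single, Nm_one]

lemma sigma_zero (hσ : IsMatrixMorphism σ) : σ 0 = 0 := by
  have := hσ.2.1 0 0; simpa using this.symm

lemma delta_zero (hδ : IsVectorDerivation σ δ) : δ 0 = 0 := by
  have := hδ.1 0 0; simpa using this.symm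

lemma delta_one (hσ : IsMatrixMorphism σ) (hδ : IsVectorDerivation σ δ) : δ (1 : 𝔽) = 0 := by
  have h := hδ.2 1 1
  rw [one_mul, hσ.1] at h
  funext i
  have := congrFun h i
  simpa [Matrix.one_mulVec] using this

lemma psi_zero (hσ : IsMatrixMorphism σ) (hδ : IsVectorDerivation σ δ)
    (a : Fin n → 𝔽) (i : Fin n) : psi σ δ a i 0 = 0 := by
  simp [psi, sigma_zero hσ, delta_zero hδ]

lemma psi_add (hσ : IsMatrixMorphism σ) (hδ : IsVectorDerivation σ δ)
    (a : Fin n → 𝔽) (i : Fin n) (b b' : 𝔽) :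
    psi σ δ a i (b + b') = psi σ δ a i b + psi σ δ a i b' := by
  simp only [psi, hσ.2.1, hδ.1, Matrix.add_apply, Pi.add_apply, add_mul]
  rw [Finset.sum_add_distrib]; abel

lemma psi_one (hσ : IsMatrixMorphism σ) (hδ : IsVectorDerivation σ δ)
    (a : Fin n → 𝔽) (i : Fin n) : psi σ δ a i 1 = a i := by
  simp [psi, hσ.1, delta_one hσ hδ, Matrix.one_apply]

/-- Key scalar identity: `Ψⱼ(c·d) = Σₖ σ(c)_{j,k} Ψₖ(d) + δⱼ(c) d`. -/
lemma psi_mul (hσ : IsMatrixMorphism σ) (hδ : IsVectorDerivation σ δ)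
    (a : Fin n → 𝔽) (j : Fin n) (c d : 𝔽) :
    psi σ δ a j (c * d) = (∑ k, σ c j k * psi σ δ a k d) + δ c j * d := by
  simp only [psi, hσ.2.2, hδ.2, Matrix.mul_apply, Matrix.mulVec, dotProduct,
    Pi.add_apply, Finset.sum_mul, Finset.mul_sum, mul_add, mul_assoc]
  rw [Finset.sum_add_distrib, Finset.sum_comm]
  abel

/-! ### Basic consequences of the `RawMul` axioms -/

lemma zero_mul' (F : SkewPoly 𝔽 n) : S.mul 0 F = 0 := by
  have h := S.add_mul 0 0 F
  rw [add_zero] at h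
  exact (right_eq_add.mp h).symm ▸ rfl

lemma mul_zero' (F : SkewPoly 𝔽 n) : S.mul F 0 = 0 := by
  have h := S.mul_add F 0 0
  rw [add_zero] at h
  exact (right_eq_add.mp h).symm ▸ rfl

lemma smul_eq_mulC (c : 𝔽) (F : SkewPoly 𝔽 n) : c • F = S.mul (C n c) F :=
  (S.const_mul c F).symm

lemma single_eq_mulC (m : FreeMonoid (Fin n)) (c : 𝔽) :
    Finsupp.single m c = S.mul (C n c) (Finsupp.single m 1) := by
  rw [← smul_eq_mulC, Finsupp.smul_single, smul_eq_mul, mul_one]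

lemma mul_sum' {ι : Type*} (s : Finset ι) (F : SkewPoly 𝔽 n) (G : ι → SkewPoly 𝔽 n) :
    S.mul F (∑ i ∈ s, G i) = ∑ i ∈ s, S.mul F (G i) := by
  classical
  induction s using Finset.induction with
  | empty => simpa using mul_zero' F
  | insert _ _ h ih => rw [Finset.sum_insert h, Finset.sum_insert h, S.mul_add, ih]

lemma sum_mul' {ι : Type*} (s : Finset ι) (F : SkewPoly 𝔽 n) (G : ι → SkewPoly 𝔽 n) :
    S.mul (∑ i ∈ s, G i) F = ∑ i ∈ s, S.mul (G i) F := by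
  classical
  induction s using Finset.induction with
  | empty => simpa using zero_mul' F
  | insert _ _ h ih => rw [Finset.sum_insert h, Finset.sum_insert h, S.add_mul, ih]

lemma X_eq (i : Fin n) : X 𝔽 i = Finsupp.single (FreeMonoid.of i) (1 : 𝔽) := rfl

lemma mul_single_one (m m' : FreeMonoid (Fin n)) (c : 𝔽) :
    S.mul (Finsupp.single m c) (Finsupp.single m' 1) = Finsupp.single (m * m') c := by
  rw [single_eq_mulC (S := S) m c, S.mul_assoc, S.mono_mul_mono, ← single_eq_mulC]

/-- Commutation through a variable, in `smul` form:
`xⱼ (c • Q) = Σₖ σ(c)_{j,k} • (xₖ Q) + δⱼ(c) • Q`. -/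
lemma mul_X_smul (hS : HasCommRule S σ δ) (j : Fin n) (c : 𝔽) (Q : SkewPoly 𝔽 n) :
    S.mul (X 𝔽 j) (c • Q) =
      (∑ k, σ c j k • S.mul (X 𝔽 k) Q) + δ c j • Q := by
  rw [smul_eq_mulC (S := S), ← S.mul_assoc, hS j c, S.add_mul, sum_mul']
  congr 1
  · refine Finset.sum_congr rfl fun k _ => ?_
    have : Finsupp.single (FreeMonoid.of k) (σ c j k) = S.mul (C n (σ c j k)) (X 𝔽 k) := by
      rw [← smul_eq_mulC, X_eq, Finsupp.smul_single, smul_eq_mul, mul_one]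
    rw [this, S.mul_assoc, ← smul_eq_mulC]
  · rw [← smul_eq_mulC]

/-- Evaluation through a variable: `E_a(xⱼ Q) = Ψⱼ(E_a Q)`. -/
lemma evm_mul_X (hσ : IsMatrixMorphism σ) (hδ : IsVectorDerivation σ δ)
    (hS : HasCommRule S σ δ) (a : Fin n → 𝔽) (j : Fin n) (Q : SkewPoly 𝔽 n) :
    evm σ δ a (S.mul (X 𝔽 j) Q) = psi σ δ a j (evm σ δ a Q) := by
  induction Q using Finsupp.induction with
  | zero => rw [mul_zero', map_zero, psi_zero hσ hδ]
  | single_add m c f _ _ ih =>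
    rw [S.mul_add, map_add, map_add, psi_add hσ hδ, ih]
    congr 1
    have hsm : Finsupp.single m c = c • Finsupp.single m (1:𝔽) := by
      rw [Finsupp.smul_single, smul_eq_mul, mul_one]
    rw [hsm, mul_X_smul hS]
    have hxm : ∀ k : Fin n, S.mul (X 𝔽 k) (Finsupp.single m (1:𝔽))
        = Finsupp.single (FreeMonoid.of k * m) (1:𝔽) := fun k => S.mono_mul_mono _ _
    simp only [map_add, map_sum, _root_.map_smul, hxm, evm_single, one_mul, mul_one,
      smul_eq_mul, Nm_of_mul, psi_mul hσ hδ]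

/-! ### The point ideal -/

lemma pI_zero (a : Fin n → 𝔽) : (0 : SkewPoly 𝔽 n) ∈ pointIdeal S a :=
  ⟨0, by simp [zero_mul']⟩

lemma pI_add {a : Fin n → 𝔽} {F G : SkewPoly 𝔽 n}
    (hF : F ∈ pointIdeal S a) (hG : G ∈ pointIdeal S a) : F + G ∈ pointIdeal S a := by
  obtain ⟨P, hP⟩ := hF; obtain ⟨Q, hQ⟩ := hG
  exact ⟨P + Q, by simp [hP, hQ, S.add_mul, Finset.sum_add_distrib]⟩

lemma pI_mul_left {a : Fin n → 𝔽} {F : SkewPoly 𝔽 n} (H : SkewPoly 𝔽 n)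
    (hF : F ∈ pointIdeal S a) : S.mul H F ∈ pointIdeal S a := by
  obtain ⟨P, hP⟩ := hF
  refine ⟨fun i => S.mul H (P i), ?_⟩
  rw [hP, mul_sum']
  exact Finset.sum_congr rfl fun i _ => (S.mul_assoc _ _ _).symm

lemma pI_smul {a : Fin n → 𝔽} {F : SkewPoly 𝔽 n} (c : 𝔽)
    (hF : F ∈ pointIdeal S a) : c • F ∈ pointIdeal S a := by
  rw [smul_eq_mulC (S := S)]; exact pI_mul_left _ hF

lemma pI_gen (a : Fin n → 𝔽) (i : Fin n) : X 𝔽 i - C n (a i) ∈ pointIdeal S a := by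
  classical
  refine ⟨fun k => if k = i then C n 1 else 0, ?_⟩
  rw [Finset.sum_eq_single i]
  · simp [S.one_mul]
  · intro k _ hk; simp [hk, zero_mul']
  · simp

lemma pI_sum {ι : Type*} {a : Fin n → 𝔽} (s : Finset ι) (F : ι → SkewPoly 𝔽 n)
    (h : ∀ i ∈ s, F i ∈ pointIdeal S a) : (∑ i ∈ s, F i) ∈ pointIdeal S a := by
  classical
  induction s using Finset.induction with
  | empty => simpa using pI_zero a
  | insert _ _ hx ih =>
    rw [Finset.sum_insert hx]
    exact pI_add (h _ (Finset.mem_insert_self _ _))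
      (ih fun i hi => h i (Finset.mem_insert_of_mem hi))

lemma C_add (x y : 𝔽) : C n (x + y) = C n x + C n y := by simp [C, Finsupp.single_add]

lemma smul_C (c x : 𝔽) : c • C n x = C n (c * x) := by
  rw [C, Finsupp.smul_single, smul_eq_mul]; rfl

/-- `xⱼ · C(b) ≡ C(Ψⱼ(b))` modulo the point ideal. -/
lemma mul_X_C_decomp (hS : HasCommRule S σ δ) (a : Fin n → 𝔽) (j : Fin n) (b : 𝔽) :
    S.mul (X 𝔽 j) (C n b) - C n (psi σ δ a j b) ∈ pointIdeal S a := by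
  have key : S.mul (X 𝔽 j) (C n b) - C n (psi σ δ a j b)
      = ∑ k, (σ b j k) • (X 𝔽 k - C n (a k)) := by
    rw [hS j b, psi]
    have h1 : C n ((∑ k, σ b j k * a k) + δ b j)
        = (∑ k, C n (σ b j k * a k)) + C n (δ b j) := by
      rw [C_add]
      congr 1
      exact map_sum (Finsupp.singleAddHom (1 : FreeMonoid (Fin n))) _ _
    rw [h1]
    have h2 : ∀ k : Fin n, (σ b j k) • (X 𝔽 k - C n (a k))
        = Finsupp.single (FreeMonoid.of k) (σ b j k) - C n (σ b j k * a k) := by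
      intro k
      rw [smul_sub, smul_C, X_eq, Finsupp.smul_single, smul_eq_mul, mul_one]
    simp only [h2, Finset.sum_sub_distrib]
    abel
  rw [key]
  exact pI_sum _ _ fun k _ => pI_smul _ (pI_gen a k)

/-- Every monomial is congruent to its fundamental value modulo the point ideal. -/
lemma mono_decomp (hS : HasCommRule S σ δ) (a : Fin n → 𝔽) (m : FreeMonoid (Fin n)) :
    Finsupp.single m 1 - C n (Nm σ δ a m) ∈ pointIdeal S a := by
  induction m using FreeMonoid.recOn with
  | one => rw [Nm_one]; show C n 1 - C n 1 ∈ _; rw [sub_self]; exact pI_zero a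
  | of_mul j m' ih =>
    have h1 : Finsupp.single (FreeMonoid.of j * m') (1:𝔽)
        = S.mul (X 𝔽 j) (Finsupp.single m' 1) := (S.mono_mul_mono _ _).symm
    have h2 : S.mul (X 𝔽 j) (Finsupp.single m' 1)
        = S.mul (X 𝔽 j) (Finsupp.single m' 1 - C n (Nm σ δ a m')) + S.mul (X 𝔽 j) (C n (Nm σ δ a m')) := by
      rw [← S.mul_add]; congr 1; abel
    rw [h1, Nm_of_mul, h2]
    have := pI_add (pI_mul_left (S := S) (X 𝔽 j) ih) (mul_X_C_decomp hS a j (Nm σ δ a m'))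
    convert this using 1
    abel

/-- Existence of the decomposition: `F ≡ C(E_a F)` mod the point ideal. -/
lemma sub_evm_mem (hS : HasCommRule S σ δ) (a : Fin n → 𝔽) (F : SkewPoly 𝔽 n) :
    F - C n (evm σ δ a F) ∈ pointIdeal S a := by
  induction F using Finsupp.induction with
  | zero => rw [map_zero]; show (0:SkewPoly 𝔽 n) - C n 0 ∈ _; simp [C]; exact pI_zero a
  | single_add m c f _ _ ih =>
    have hsm : (Finsupp.single m c : SkewPoly 𝔽 n) = c • Finsupp.single m (1:𝔽) := by
      rw [Finsupp.smul_single, smul_eq_mul, mul_one]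
    have key : (Finsupp.single m c + f) - C n (evm σ δ a (Finsupp.single m c + f))
        = c • (Finsupp.single m 1 - C n (Nm σ δ a m)) + (f - C n (evm σ δ a f)) := by
      rw [map_add, C_add, evm_single, smul_sub, smul_C, hsm]
      abel
    rw [key]
    exact pI_add (pI_smul _ (mono_decomp hS a m)) ih

lemma decomposes_iff (a : Fin n → 𝔽) (F : SkewPoly 𝔽 n) (b : 𝔽) :
    Decomposes S a F b ↔ F - C n b ∈ pointIdeal S a := by
  constructor
  · rintro ⟨G, hG⟩; exact ⟨G, by rw [hG]; abel⟩
  · rintro ⟨G, hG⟩; exact ⟨G, by rw [← hG]; abel⟩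

/-- `E_a` kills products whose right factor evaluates to zero. -/
lemma evm_mul_of_zero (hσ : IsMatrixMorphism σ) (hδ : IsVectorDerivation σ δ)
    (hS : HasCommRule S σ δ) (a : Fin n → 𝔽) {P : SkewPoly 𝔽 n}
    (hP : evm σ δ a P = 0) (F : SkewPoly 𝔽 n) : evm σ δ a (S.mul F P) = 0 := by
  have mono : ∀ m : FreeMonoid (Fin n), evm σ δ a (S.mul (Finsupp.single m 1) P) = 0 := by
    intro m
    induction m using FreeMonoid.recOn with
    | one => show evm σ δ a (S.mul (C n 1) P) = 0; rw [S.one_mul]; exact hP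
    | of_mul j m' ih =>
      have h1 : (Finsupp.single (FreeMonoid.of j * m') (1:𝔽)) = S.mul (X 𝔽 j) (Finsupp.single m' 1) :=
        (S.mono_mul_mono _ _).symm
      rw [h1, S.mul_assoc, evm_mul_X hσ hδ hS, ih, psi_zero hσ hδ]
  induction F using Finsupp.induction with
  | zero => rw [zero_mul', map_zero]
  | single_add m c f _ _ ih =>
    rw [S.add_mul, map_add, ih, add_zero, single_eq_mulC (S := S), S.mul_assoc,
      ← smul_eq_mulC, _root_.map_smul, mono, smul_zero]

lemma evm_pointIdeal (hσ : IsMatrixMorphism σ) (hδ : IsVectorDerivation σ δ)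
    (hS : HasCommRule S σ δ) {a : Fin n → 𝔽} {F : SkewPoly 𝔽 n}
    (hF : F ∈ pointIdeal S a) : evm σ δ a F = 0 := by
  obtain ⟨G, hG⟩ := hF
  rw [hG, map_sum]
  refine Finset.sum_eq_zero fun i _ => evm_mul_of_zero hσ hδ hS a ?_ _
  rw [map_sub, evm_C, X_eq, evm_single, one_mul]
  show Nm σ δ a (FreeMonoid.of i * 1) - a i = 0
  rw [Nm_of_mul, Nm_one, psi_one hσ hδ, sub_self]

/-- The `eval` of the problem statement agrees with the explicit functional `E_a`. -/
lemma eval_eq (hσ : IsMatrixMorphism σ) (hδ : IsVectorDerivation σ δ)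
    (hS : HasCommRule S σ δ) (a : Fin n → 𝔽) (F : SkewPoly 𝔽 n) :
    eval S a F = evm σ δ a F := by
  have hex : ∃ b : 𝔽, Decomposes S a F b :=
    ⟨evm σ δ a F, (decomposes_iff a F _).mpr (sub_evm_mem hS a F)⟩
  have huniq : ∀ b, Decomposes S a F b → b = evm σ δ a F := by
    intro b hb
    have := evm_pointIdeal hσ hδ hS ((decomposes_iff a F b).mp hb)
    rw [map_sub, evm_C, sub_eq_zero] at this
    exact this.symm
  rw [eval, dif_pos hex]
  exact huniq _ hex.choose_spec

/-! ### Evaluation on a finite set of points -/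

section EvT

variable (σ δ) in
/-- Joint evaluation at all points of a finite set `T`. -/
noncomputable def EvT (T : Finset (Fin n → 𝔽)) : SkewPoly 𝔽 n →ₗ[𝔽] (↥T → 𝔽) :=
  LinearMap.pi fun c => evm σ δ (↑c)

variable (𝔽 n) in
/-- The span of monomials of length `< d`. -/
noncomputable def Rlt (d : ℕ) : Submodule 𝔽 (SkewPoly 𝔽 n) :=
  Submodule.span 𝔽 {F | ∃ m : FreeMonoid (Fin n), FreeMonoid.length m < d ∧ F = Finsupp.single m 1}

variable (σ δ) in
/-- The span of the rows of the degree-`d` Vandermonde matrix of `T`. -/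
noncomputable def Vsp (T : Finset (Fin n → 𝔽)) (d : ℕ) : Submodule 𝔽 (↥T → 𝔽) :=
  Submodule.map (EvT σ δ T) (Rlt 𝔽 n d)

lemma Rlt_mono {d d' : ℕ} (h : d ≤ d') : Rlt 𝔽 n d ≤ Rlt 𝔽 n d' :=
  Submodule.span_mono fun F ⟨m, hm, hF⟩ => ⟨m, lt_of_lt_of_le hm h, hF⟩

lemma single_mem_Rlt {m : FreeMonoid (Fin n)} {d : ℕ} (h : FreeMonoid.length m < d) (c : 𝔽) :
    (Finsupp.single m c : SkewPoly 𝔽 n) ∈ Rlt 𝔽 n d := by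
  have : (Finsupp.single m c : SkewPoly 𝔽 n) = c • Finsupp.single m 1 := by
    rw [Finsupp.smul_single, smul_eq_mul, mul_one]
  rw [this]
  exact Submodule.smul_mem _ _ (Submodule.subset_span ⟨m, h, rfl⟩)

lemma exists_Rlt (F : SkewPoly 𝔽 n) : ∃ d, F ∈ Rlt 𝔽 n d := by
  induction F using Finsupp.induction with
  | zero => exact ⟨0, Submodule.zero_mem _⟩
  | single_add m c f _ _ ih =>
    obtain ⟨d, hd⟩ := ih
    refine ⟨max d (FreeMonoid.length m + 1), Submodule.add_mem _ ?_ ?_⟩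
    · exact single_mem_Rlt (lt_of_lt_of_le (Nat.lt_succ_self _) (le_max_right _ _)) c
    · exact Rlt_mono (le_max_left _ _) hd

/-- Multiplying by a variable raises the degree bound by one. -/
lemma mul_X_mem_Rlt (hS : HasCommRule S σ δ) {d : ℕ} {Q : SkewPoly 𝔽 n}
    (hQ : Q ∈ Rlt 𝔽 n d) (k : Fin n) : S.mul (X 𝔽 k) Q ∈ Rlt 𝔽 n (d + 1) := by
  classical
  let P : Submodule 𝔽 (SkewPoly 𝔽 n) :=
    { carrier := {Q | Q ∈ Rlt 𝔽 n d ∧ ∀ k : Fin n, S.mul (X 𝔽 k) Q ∈ Rlt 𝔽 n (d + 1)}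
      add_mem' := fun {x y} hx hy => ⟨Submodule.add_mem _ hx.1 hy.1,
        fun k => by rw [S.mul_add]; exact Submodule.add_mem _ (hx.2 k) (hy.2 k)⟩
      zero_mem' := ⟨Submodule.zero_mem _, fun k => by
        rw [mul_zero']; exact Submodule.zero_mem _⟩
      smul_mem' := fun c {x} hx => ⟨Submodule.smul_mem _ _ hx.1, fun k => by
        rw [mul_X_smul hS]
        exact Submodule.add_mem _
          (Submodule.sum_mem _ fun l _ => Submodule.smul_mem _ _ (hx.2 l))
          (Submodule.smul_mem _ _ (Rlt_mono (Nat.le_succ d) hx.1))⟩ }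
  have hle : Rlt 𝔽 n d ≤ P := by
    rw [Rlt, Submodule.span_le]
    rintro F ⟨m, hm, rfl⟩
    refine ⟨Submodule.subset_span ⟨m, hm, rfl⟩, fun k => ?_⟩
    rw [X_eq, S.mono_mul_mono]
    refine single_mem_Rlt ?_ 1
    rw [FreeMonoid.length_mul, FreeMonoid.length_of]
    omega
  exact (hle hQ).2 k

end EvT

section Stab

variable (hσ : IsMatrixMorphism σ) (hδ : IsVectorDerivation σ δ) (hS : HasCommRule S σ δ)

lemma Vsp_mono (T : Finset (Fin n → 𝔽)) {d d' : ℕ} (h : d ≤ d') :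
    Vsp σ δ T d ≤ Vsp σ δ T d' := Submodule.map_mono (Rlt_mono h)

lemma Vsp_le_range (T : Finset (Fin n → 𝔽)) (d : ℕ) :
    Vsp σ δ T d ≤ LinearMap.range (EvT σ δ T) := by
  rw [← Submodule.map_top]
  exact Submodule.map_mono le_top

include hσ hδ hS in
/-- Stabilization step for the chain of Vandermonde spans. -/
lemma Vsp_stab_step (T : Finset (Fin n → 𝔽)) (d : ℕ)
    (h : Vsp σ δ T (d + 1) ≤ Vsp σ δ T d) :
    Vsp σ δ T (d + 2) ≤ Vsp σ δ T (d + 1) := by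
  rw [Vsp, Rlt, Submodule.map_span, Submodule.span_le]
  rintro x ⟨F, ⟨m, hm, rfl⟩, rfl⟩
  rcases Nat.lt_or_ge (FreeMonoid.length m) (d + 1) with hlt | hge
  · exact ⟨Finsupp.single m 1, single_mem_Rlt hlt 1, rfl⟩
  · -- `m` is nonempty; split off the first letter
    induction m using FreeMonoid.recOn with
    | one => simp [FreeMonoid.length_one] at hge
    | of_mul j m' _ =>
      have hlen : FreeMonoid.length m' < d + 1 := by
        rw [FreeMonoid.length_mul, FreeMonoid.length_of] at hm; omega
      -- `EvT (single m' 1)` lies in `Vsp d`, giving `Q ∈ Rlt d` with same evaluation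
      have hmem : EvT σ δ T (Finsupp.single m' 1) ∈ Vsp σ δ T d :=
        h ⟨Finsupp.single m' 1, single_mem_Rlt hlen 1, rfl⟩
      obtain ⟨Q, hQ, hEQ⟩ := hmem
      have hsplit : (Finsupp.single (FreeMonoid.of j * m') (1:𝔽))
          = S.mul (X 𝔽 j) (Finsupp.single m' 1 - Q) + S.mul (X 𝔽 j) Q := by
        rw [← S.mul_add, sub_add_cancel, X_eq]
        exact (S.mono_mul_mono _ _).symm
      rw [hsplit, map_add]
      refine Submodule.add_mem _ ?_ ?_
      · have hz : EvT σ δ T (S.mul (X 𝔽 j) ((Finsupp.single m' 1 : SkewPoly 𝔽 n) - Q)) = 0 := by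
          funext c
          have hc : evm σ δ (↑c) ((Finsupp.single m' 1 : SkewPoly 𝔽 n) - Q) = 0 := by
            have h1 : evm σ δ (↑c) Q = evm σ δ (↑c) (Finsupp.single m' (1:𝔽)) :=
              congrFun hEQ c
            rw [map_sub, ← h1, sub_self]
          show evm σ δ (↑c) (S.mul (X 𝔽 j) _) = 0
          exact evm_mul_of_zero hσ hδ hS (↑c) hc (X 𝔽 j)
        rw [hz]; exact Submodule.zero_mem _
      · exact ⟨S.mul (X 𝔽 j) Q, mul_X_mem_Rlt hS hQ j, rfl⟩

end Stab

section RankDefs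

open Module

variable (hσ : IsMatrixMorphism σ) (hδ : IsVectorDerivation σ δ) (hS : HasCommRule S σ δ)

include hσ hδ hS in
lemma Vsp_stab_all (T : Finset (Fin n → 𝔽)) (d : ℕ)
    (h : Vsp σ δ T (d + 1) ≤ Vsp σ δ T d) :
    ∀ e, Vsp σ δ T (d + e) ≤ Vsp σ δ T d := by
  have step : ∀ e, Vsp σ δ T (d + e + 1) ≤ Vsp σ δ T (d + e) := by
    intro e
    induction e with
    | zero => simpa using h
    | succ e ih =>
      have := Vsp_stab_step hσ hδ hS T (d + e) ih
      have heq : d + (e + 1) + 1 = d + e + 2 := by omega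
      rw [heq]
      have heq2 : d + (e + 1) = d + e + 1 := by omega
      rw [heq2]
      exact this
  intro e
  induction e with
  | zero => simp
  | succ e ih =>
    refine le_trans ?_ ih
    have heq : d + (e + 1) = d + e + 1 := by omega
    rw [heq]
    exact step e

include hσ hδ hS in
lemma range_eq_Vsp (T : Finset (Fin n → 𝔽)) (d : ℕ)
    (h : Vsp σ δ T (d + 1) ≤ Vsp σ δ T d) :
    LinearMap.range (EvT σ δ T) = Vsp σ δ T d := by
  refine le_antisymm ?_ (Vsp_le_range T d)
  rintro x ⟨F, rfl⟩
  obtain ⟨e, he⟩ := exists_Rlt F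
  have hx : EvT σ δ T F ∈ Vsp σ δ T e := ⟨F, he, rfl⟩
  rcases le_total e d with h' | h'
  · exact Vsp_mono T h' hx
  · obtain ⟨e', rfl⟩ := Nat.exists_eq_add_of_le h'
    exact Vsp_stab_all hσ hδ hS T d h e' hx

include hσ hδ hS in
lemma Vsp_card_eq_range (T : Finset (Fin n → 𝔽)) :
    Vsp σ δ T T.card = LinearMap.range (EvT σ δ T) := by
  by_cases hex : ∃ d < T.card, Vsp σ δ T (d + 1) ≤ Vsp σ δ T d
  · obtain ⟨d, hd, h⟩ := hex
    refine le_antisymm (Vsp_le_range T _) ?_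
    rw [range_eq_Vsp hσ hδ hS T d h]
    exact Vsp_mono T (le_of_lt hd)
  · push_neg at hex
    have hfin : Module.finrank 𝔽 (↥T → 𝔽) = T.card := by
      rw [Module.finrank_pi, Fintype.card_coe]
    have hstrict : ∀ d, d ≤ T.card → d ≤ Module.finrank 𝔽 ↥(Vsp σ δ T d) := by
      intro d
      induction d with
      | zero => intro _; exact Nat.zero_le _
      | succ d ih =>
        intro hd
        have h1 : Vsp σ δ T d < Vsp σ δ T (d + 1) :=
          lt_of_le_of_ne (Vsp_mono T (Nat.le_succ d))
            (fun heq => hex d (by omega) (le_of_eq heq.symm))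
        have := Submodule.finrank_lt_finrank_of_lt h1
        have := ih (by omega)
        omega
    have h1 : T.card ≤ Module.finrank 𝔽 ↥(Vsp σ δ T T.card) := hstrict _ le_rfl
    have h2 : Module.finrank 𝔽 ↥(LinearMap.range (EvT σ δ T)) ≤ T.card := by
      rw [← hfin]; exact Submodule.finrank_le _
    exact Submodule.eq_of_le_of_finrank_le (Vsp_le_range T _) (by
      have := Submodule.finrank_mono (Vsp_le_range (σ := σ) (δ := δ) T T.card)
      omega)

variable (σ δ) in
/-- The rank function: dimension of the image of the evaluation map at `T`. -/
noncomputable def fT (T : Finset (Fin n → 𝔽)) : ℕ :=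
  Module.finrank 𝔽 ↥(LinearMap.range (EvT σ δ T))

include hσ hδ hS in
lemma vand_eq (T : Finset (Fin n → 𝔽)) (d : ℕ) :
    vandermondeRank S T d = Module.rank 𝔽 ↥(Vsp σ δ T d) := by
  have h1 : (Set.range fun m : {m : FreeMonoid (Fin n) // FreeMonoid.length m < d} =>
      fun c : ↥T => eval S ↑c (Finsupp.single (m : FreeMonoid (Fin n)) (1:𝔽)))
      = (EvT σ δ T) '' {F | ∃ m : FreeMonoid (Fin n),
          FreeMonoid.length m < d ∧ F = Finsupp.single m 1} := by
    ext x
    constructor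
    · rintro ⟨m, rfl⟩
      refine ⟨Finsupp.single ↑m 1, ⟨↑m, m.2, rfl⟩, ?_⟩
      funext c
      exact (eval_eq hσ hδ hS _ _).symm
    · rintro ⟨F, ⟨m, hm, rfl⟩, rfl⟩
      exact ⟨⟨m, hm⟩, by funext c; exact eval_eq hσ hδ hS _ _⟩
  have h2 : Submodule.span 𝔽 (Set.range fun m : {m : FreeMonoid (Fin n) // FreeMonoid.length m < d} =>
      fun c : ↥T => eval S ↑c (Finsupp.single (m : FreeMonoid (Fin n)) (1:𝔽))) = Vsp σ δ T d := by
    rw [h1, ← Submodule.map_span]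
    rfl
  rw [vandermondeRank, h2]

include hσ hδ hS in
lemma vand_card_eq (T : Finset (Fin n → 𝔽)) :
    vandermondeRank S T T.card = (fT σ δ T : Cardinal) := by
  rw [vand_eq hσ hδ hS, Vsp_card_eq_range hσ hδ hS, fT, Module.finrank_eq_rank]

end RankDefs

/-! ### P-closure combinatorics -/

section Closure

open Module

variable (hσ : IsMatrixMorphism σ) (hδ : IsVectorDerivation σ δ) (hS : HasCommRule S σ δ)

lemma subset_pClosure (Ω : Set (Fin n → 𝔽)) : Ω ⊆ pClosure S Ω :=
  fun a ha F hF => hF a ha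

lemma pClosure_mono {Ω Ω' : Set (Fin n → 𝔽)} (h : Ω ⊆ Ω') :
    pClosure S Ω ⊆ pClosure S Ω' :=
  fun a ha F hF => ha F fun c hc => hF c (h hc)

lemma pClosure_subset_pClosure {Ω Ω' : Set (Fin n → 𝔽)} (h : Ω' ⊆ pClosure S Ω) :
    pClosure S Ω' ⊆ pClosure S Ω :=
  fun x hx F hF => hx F fun c hc => (h hc) F hF

include hσ hδ hS in
lemma mem_pClosure_iff (T : Finset (Fin n → 𝔽)) (x : Fin n → 𝔽) :
    x ∈ pClosure S ↑T ↔ ∀ F : SkewPoly 𝔽 n, EvT σ δ T F = 0 → evm σ δ x F = 0 := by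
  simp only [pClosure, zeroIdeal, Set.mem_setOf_eq, eval_eq hσ hδ hS]
  constructor
  · intro hx F hF
    refine hx F fun c hc => ?_
    exact congrFun hF ⟨c, hc⟩
  · intro hx F hF
    exact hx F (funext fun c => hF ↑c c.2)

variable (σ δ) in
/-- Restriction of joint evaluations along a subset of points. -/
noncomputable def resQ {T T' : Finset (Fin n → 𝔽)} (h : T ⊆ T') :
    ↥(LinearMap.range (EvT σ δ T')) →ₗ[𝔽] ↥(LinearMap.range (EvT σ δ T)) :=
  (LinearMap.funLeft 𝔽 𝔽 fun c : ↥T => (⟨↑c, h c.2⟩ : ↥T')).restrict (by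
    rintro x ⟨F, rfl⟩; exact ⟨F, rfl⟩)

lemma resQ_apply {T T' : Finset (Fin n → 𝔽)} (h : T ⊆ T') (F : SkewPoly 𝔽 n)
    (hF : EvT σ δ T' F ∈ LinearMap.range (EvT σ δ T')) :
    resQ σ δ h ⟨EvT σ δ T' F, hF⟩ = ⟨EvT σ δ T F, ⟨F, rfl⟩⟩ :=
  Subtype.ext rfl

lemma resQ_surj {T T' : Finset (Fin n → 𝔽)} (h : T ⊆ T') :
    Function.Surjective (resQ σ δ h) := by
  rintro ⟨y, F, rfl⟩
  exact ⟨⟨EvT σ δ T' F, ⟨F, rfl⟩⟩, Subtype.ext rfl⟩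

lemma fT_rank_nullity {T T' : Finset (Fin n → 𝔽)} (h : T ⊆ T') :
    fT σ δ T + Module.finrank 𝔽 ↥(LinearMap.ker (resQ σ δ h)) = fT σ δ T' := by
  have hrn := LinearMap.finrank_range_add_finrank_ker (resQ σ δ h)
  rwa [LinearMap.range_eq_top.mpr (resQ_surj h), finrank_top] at hrn

lemma fT_mono {T T' : Finset (Fin n → 𝔽)} (h : T ⊆ T') : fT σ δ T ≤ fT σ δ T' := by
  have := fT_rank_nullity (σ := σ) (δ := δ) h
  omega

lemma fT_le_card (T : Finset (Fin n → 𝔽)) : fT σ δ T ≤ T.card := by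
  have h1 : Module.finrank 𝔽 (↥T → 𝔽) = T.card := by
    rw [Module.finrank_pi, Fintype.card_coe]
  rw [fT, ← h1]
  exact Submodule.finrank_le _

end Closure

section Closure2

open Module

set_option synthInstance.maxHeartbeats 400000
set_option maxHeartbeats 1000000

variable [DecidableEq (Fin n → 𝔽)]

variable (hσ : IsMatrixMorphism σ) (hδ : IsVectorDerivation σ δ) (hS : HasCommRule S σ δ)

include hσ hδ hS in
/-- Key equivalence: `a` is in the P-closure of `T` iff adding `a` does not
increase the evaluation rank. -/
lemma mem_closure_iff_fT (T : Finset (Fin n → 𝔽)) (a : Fin n → 𝔽) :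
    a ∈ pClosure S ↑T ↔ fT σ δ (insert a T) = fT σ δ T := by
  classical
  set T' := insert a T with hT'
  have hsub : T ⊆ T' := Finset.subset_insert a T
  rw [mem_pClosure_iff hσ hδ hS]
  constructor
  · intro hcl
    have hinj : Function.Injective (resQ σ δ hsub) := by
      rw [← LinearMap.ker_eq_bot]
      refine (Submodule.eq_bot_iff _).mpr fun x hx => ?_
      obtain ⟨xv, F, rfl⟩ := x
      have hx' : resQ σ δ hsub ⟨EvT σ δ T' F, ⟨F, rfl⟩⟩ = 0 := hx
      replace hx' := (resQ_apply hsub F _).symm.trans hx'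
      have hTF : EvT σ δ T F = 0 := congrArg Subtype.val hx'
      refine Subtype.ext (funext fun c => ?_)
      rcases Finset.mem_insert.mp c.2 with hc | hc
      · show evm σ δ (↑c) F = 0
        rw [hc]
        exact hcl F hTF
      · exact congrFun hTF ⟨↑c, hc⟩
    exact (LinearEquiv.ofBijective (resQ σ δ hsub) ⟨hinj, resQ_surj hsub⟩).finrank_eq
  · intro hrk
    have hker : Module.finrank 𝔽 ↥(LinearMap.ker (resQ σ δ hsub)) = 0 := by
      have := fT_rank_nullity (σ := σ) (δ := δ) hsub
      omega
    have hinj : Function.Injective (resQ σ δ hsub) :=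
      LinearMap.ker_eq_bot.mp (Submodule.finrank_eq_zero.mp hker)
    intro F hF
    have h0 : resQ σ δ hsub ⟨EvT σ δ T' F, ⟨F, rfl⟩⟩ = 0 := by
      refine (resQ_apply hsub F _).trans ?_
      exact Subtype.ext hF
    have := hinj (h0.trans (map_zero (resQ σ δ hsub)).symm)
    have hv : EvT σ δ T' F = 0 := congrArg Subtype.val this
    exact congrFun hv ⟨a, Finset.mem_insert_self a T⟩

lemma fT_insert_le (T : Finset (Fin n → 𝔽)) (a : Fin n → 𝔽) :
    fT σ δ (insert a T) ≤ fT σ δ T + 1 := by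
  classical
  by_cases ha : a ∈ T
  · rw [Finset.insert_eq_self.mpr ha]; omega
  set T' := insert a T with hT'
  have hsub : T ⊆ T' := Finset.subset_insert a T
  have hb : Module.finrank 𝔽 ↥(LinearMap.ker (resQ σ δ (T := T) (T' := T') hsub)) ≤ 1 := by
    set φ : ↥(LinearMap.ker (resQ σ δ (T := T) (T' := T') hsub)) →ₗ[𝔽] 𝔽 :=
      (LinearMap.proj (⟨a, Finset.mem_insert_self a T⟩ : ↥T')).comp
        ((Submodule.subtype _).comp (Submodule.subtype (LinearMap.ker (resQ σ δ hsub)))) with hφ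
    have key : ∀ x : ↥(LinearMap.ker (resQ σ δ (T := T) (T' := T') hsub)), φ x = 0 → x = 0 := by
      intro x hx
      have hxk : resQ σ δ hsub x.1 = 0 := x.2
      have hres : ∀ c : ↥T, x.1.1 ⟨↑c, hsub c.2⟩ = 0 := by
        intro c
        exact congrFun (congrArg Subtype.val hxk) c
      refine Subtype.ext (Subtype.ext (funext fun c => ?_))
      rcases Finset.mem_insert.mp c.2 with hc | hc
      · have : φ x = 0 := hx
        have hca : c = ⟨a, Finset.mem_insert_self a T⟩ := Subtype.ext hc
        rw [hca]
        exact this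
      · have := hres ⟨↑c, hc⟩
        simpa using this
    have hker : LinearMap.ker φ = ⊥ :=
      (Submodule.eq_bot_iff _).mpr fun x hx => key x (LinearMap.mem_ker.mp hx)
    have hinj : Function.Injective φ := fun x y hxy =>
      sub_eq_zero.mp (key (x - y) (by have h := φ.map_sub x y; rw [hxy, sub_self] at h; exact h))
    have := LinearMap.finrank_le_finrank_of_injective hinj
    simpa [Module.finrank_self] using this
  have := fT_rank_nullity (σ := σ) (δ := δ) hsub
  omega

end Closure2

section Comb

open Module

variable [DecidableEq (Fin n → 𝔽)]

variable (hσ : IsMatrixMorphism σ) (hδ : IsVectorDerivation σ δ) (hS : HasCommRule S σ δ)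

include hσ hδ hS in
lemma fT_erase (B : Finset (Fin n → 𝔽)) (hB : PIndep S ↑B) {a : Fin n → 𝔽} (ha : a ∈ B) :
    fT σ δ B = fT σ δ (B.erase a) + 1 := by
  have hnot : a ∉ pClosure S ↑(B.erase a) := by
    have := hB a ha
    rwa [← Finset.coe_erase] at this
  rw [mem_closure_iff_fT hσ hδ hS] at hnot
  have hins : insert a (B.erase a) = B := Finset.insert_erase ha
  have h1 := fT_insert_le (σ := σ) (δ := δ) (B.erase a) a
  have h2 := fT_mono (σ := σ) (δ := δ) (Finset.subset_insert a (B.erase a))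
  rw [hins] at hnot h1 h2
  omega

include hσ hδ hS in
lemma pIndep_iff_fT (B : Finset (Fin n → 𝔽)) : PIndep S ↑B ↔ fT σ δ B = B.card := by
  constructor
  · intro hB
    induction B using Finset.strongInduction with
    | _ B ih =>
      rcases Finset.eq_empty_or_nonempty B with rfl | ⟨a, ha⟩
      · have : IsEmpty (↥(∅ : Finset (Fin n → 𝔽))) := by simp; exact ⟨fun x => x.2⟩
        have hsub : Subsingleton (↥(∅ : Finset (Fin n → 𝔽)) → 𝔽) := by infer_instance
        rw [Finset.card_empty, fT]
        have : Module.finrank 𝔽 (↥(∅ : Finset (Fin n → 𝔽)) → 𝔽) = 0 :=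
          Module.finrank_zero_of_subsingleton
        have hle := Submodule.finrank_le (LinearMap.range (EvT σ δ (∅ : Finset (Fin n → 𝔽))))
        omega
      · have hBe : PIndep S ↑(B.erase a) := by
          intro x hx
          have hxB : x ∈ (↑B : Set (Fin n → 𝔽)) := by
            have := Finset.erase_subset a B
            exact_mod_cast this (by exact_mod_cast hx)
          refine fun hmem => hB x hxB ?_
          refine pClosure_mono (S := S) ?_ hmem
          intro y hy
          rcases hy with ⟨hy1, hy2⟩
          rw [Finset.coe_erase] at hy1
          exact ⟨hy1.1, hy2⟩
        have := ih (B.erase a) (Finset.erase_ssubset ha) hBe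
        have hcard : (B.erase a).card = B.card - 1 := Finset.card_erase_of_mem ha
        have hstep := fT_erase hσ hδ hS B hB ha
        have hpos : 0 < B.card := Finset.card_pos.mpr ⟨a, ha⟩
        omega
  · intro hfT a ha
    rw [← Finset.coe_erase]
    have haB : a ∈ B := by exact_mod_cast ha
    rw [mem_closure_iff_fT hσ hδ hS]
    intro heq
    rw [Finset.insert_erase haB] at heq
    have hcard : (B.erase a).card = B.card - 1 := Finset.card_erase_of_mem haB
    have hle := fT_le_card (σ := σ) (δ := δ) (B.erase a)
    have hpos : 0 < B.card := Finset.card_pos.mpr ⟨a, haB⟩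
    omega

omit hσ hδ hS in
/-- If `a ∈ closure T` then the closures of `T` and `insert a T` agree. -/
lemma pClosure_insert {T : Finset (Fin n → 𝔽)} {a : Fin n → 𝔽}
    (ha : a ∈ pClosure S ↑T) :
    pClosure S ↑(insert a T) = pClosure S ↑T := by
  refine le_antisymm ?_ (pClosure_mono (by exact_mod_cast Finset.subset_insert a T))
  refine pClosure_subset_pClosure ?_
  intro x hx
  rw [Finset.coe_insert] at hx
  rcases hx with rfl | hx
  · exact ha
  · exact subset_pClosure (S := S) _ hx

include hσ hδ hS in
lemma subset_closure_iff_fT (B T : Finset (Fin n → 𝔽)) :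
    ↑T ⊆ pClosure S ↑B ↔ fT σ δ (B ∪ T) = fT σ δ B := by
  classical
  constructor
  · intro hT
    induction T using Finset.induction with
    | empty => simp
    | @insert t T ht ih =>
      have htB : t ∈ pClosure S ↑B := hT (by simp)
      have hTB : ↑T ⊆ pClosure S ↑B := fun x hx => hT (by simp [hx])
      have h1 : B ∪ insert t T = insert t (B ∪ T) := by
        ext x; simp only [Finset.mem_insert, Finset.mem_union]; tauto
      have htBT : t ∈ pClosure S ↑(B ∪ T) := by
        refine pClosure_mono (S := S) ?_ htB
        exact_mod_cast Finset.subset_union_left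
      rw [h1, ← ih hTB]
      exact (mem_closure_iff_fT hσ hδ hS _ t).mp htBT
  · intro hf x hx
    have hxT : x ∈ T := by exact_mod_cast hx
    have h1 : fT σ δ B ≤ fT σ δ (insert x B) :=
      fT_mono (Finset.subset_insert x B)
    have h2 : fT σ δ (insert x B) ≤ fT σ δ (B ∪ T) := by
      refine fT_mono ?_
      intro y hy
      rcases Finset.mem_insert.mp hy with rfl | hy
      · exact Finset.mem_union_right _ hxT
      · exact Finset.mem_union_left _ hy
    rw [mem_closure_iff_fT hσ hδ hS]
    omega

include hσ hδ hS in
/-- Characterization of P-bases among subsets of `G`. -/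
lemma isPBasis_iff_fT {B G : Finset (Fin n → 𝔽)} (hBG : B ⊆ G) :
    IsPBasis S ↑B (pClosure S ↑G) ↔ fT σ δ B = B.card ∧ fT σ δ B = fT σ δ G := by
  classical
  constructor
  · rintro ⟨hsub, hind, hcl⟩
    refine ⟨(pIndep_iff_fT hσ hδ hS B).mp hind, ?_⟩
    have hG : ↑G ⊆ pClosure S ↑B := by
      rw [hcl]; exact subset_pClosure (S := S) _
    have := (subset_closure_iff_fT hσ hδ hS B G).mp hG
    rw [Finset.union_eq_right.mpr hBG] at this
    omega
  · rintro ⟨h1, h2⟩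
    have hGcl : ↑G ⊆ pClosure S ↑B := by
      rw [subset_closure_iff_fT hσ hδ hS]
      rw [Finset.union_eq_right.mpr hBG]
      omega
    refine ⟨?_, (pIndep_iff_fT hσ hδ hS B).mpr h1, ?_⟩
    · exact le_trans (by exact_mod_cast hBG) (subset_pClosure (S := S) _)
    · refine le_antisymm ?_ ?_
      · exact pClosure_mono (by exact_mod_cast hBG)
      · exact pClosure_subset_pClosure hGcl

include hσ hδ hS in
/-- Every finite set of points contains an independent subset of full rank. -/
lemma exists_indep_subset (G : Finset (Fin n → 𝔽)) :
    ∃ B : Finset (Fin n → 𝔽), B ⊆ G ∧ fT σ δ B = B.card ∧ fT σ δ B = fT σ δ G := by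
  classical
  induction G using Finset.induction with
  | empty =>
    exact ⟨∅, le_rfl, by
      have hle := fT_le_card (σ := σ) (δ := δ) (∅ : Finset (Fin n → 𝔽))
      simp only [Finset.card_empty, Nat.le_zero] at hle
      simp [hle], rfl⟩
  | @insert a G' ha ih =>
    obtain ⟨B', hB'sub, hB'card, hB'f⟩ := ih
    have hle1 := fT_insert_le (σ := σ) (δ := δ) G' a
    have hle2 := fT_mono (σ := σ) (δ := δ) (Finset.subset_insert a G')
    by_cases hcase : fT σ δ (insert a G') = fT σ δ G'
    · exact ⟨B', le_trans hB'sub (Finset.subset_insert a G'), hB'card, by omega⟩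
    · have haB' : a ∉ B' := fun h => ha (hB'sub h)
      refine ⟨insert a B', ?_, ?_, ?_⟩
      · exact Finset.insert_subset_insert a hB'sub
      · have hnotin : fT σ δ (insert a B') ≠ fT σ δ B' := by
          intro heq
          have hmem : a ∈ pClosure S ↑B' :=
            (mem_closure_iff_fT hσ hδ hS B' a).mpr heq
          have hmem' : a ∈ pClosure S ↑G' :=
            pClosure_mono (S := S) (by exact_mod_cast hB'sub) hmem
          exact hcase ((mem_closure_iff_fT hσ hδ hS G' a).mp hmem')
        have hle3 := fT_insert_le (σ := σ) (δ := δ) B' a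
        have hle4 := fT_mono (σ := σ) (δ := δ) (Finset.subset_insert a B')
        rw [Finset.card_insert_of_notMem haB']
        omega
      · have hnotin : fT σ δ (insert a B') ≠ fT σ δ B' := by
          intro heq
          have hmem : a ∈ pClosure S ↑B' :=
            (mem_closure_iff_fT hσ hδ hS B' a).mpr heq
          have hmem' : a ∈ pClosure S ↑G' :=
            pClosure_mono (S := S) (by exact_mod_cast hB'sub) hmem
          exact hcase ((mem_closure_iff_fT hσ hδ hS G' a).mp hmem')
        have hle3 := fT_insert_le (σ := σ) (δ := δ) B' a
        have hle4 := fT_mono (σ := σ) (δ := δ) (Finset.subset_insert a B')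
        omega

include hσ hδ hS in
lemma pRank_eq (G : Finset (Fin n → 𝔽)) :
    pRank S (pClosure S ↑G) = fT σ δ G := by
  classical
  have hset : {k : ℕ | ∃ B : Finset (Fin n → 𝔽),
      IsPBasis S ↑B (pClosure S ↑G) ∧ B.card = k} = {fT σ δ G} := by
    ext k
    simp only [Set.mem_setOf_eq, Set.mem_singleton_iff]
    constructor
    · rintro ⟨B, ⟨hsub, hind, hcl⟩, rfl⟩
      have hBf : fT σ δ B = B.card := (pIndep_iff_fT hσ hδ hS B).mp hind
      have hGB : ↑G ⊆ pClosure S ↑B := by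
        rw [hcl]; exact subset_pClosure (S := S) _
      have h1 : fT σ δ (B ∪ G) = fT σ δ B :=
        (subset_closure_iff_fT hσ hδ hS B G).mp hGB
      have h2 : fT σ δ (G ∪ B) = fT σ δ G :=
        (subset_closure_iff_fT hσ hδ hS G B).mp hsub
      rw [Finset.union_comm] at h1
      omega
    · rintro rfl
      obtain ⟨B, hBsub, hBcard, hBf⟩ := exists_indep_subset hσ hδ hS G
      exact ⟨B, (isPBasis_iff_fT hσ hδ hS hBsub).mpr ⟨hBcard, hBf⟩, by omega⟩
  rw [pRank, hset, csInf_singleton]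

end Comb

end Stmt19Aux


/-- For a finite set `G` with `M` elements and `Ω = Ḡ`: the left
row-rank of the skew Vandermonde matrix `V_M(G)` equals `Rk(Ω)`; and `B ⊆ G` is a
P-basis of `Ω` iff `|B| = Rk(Ω)` and the left row-rank of `V_(|B|)(B)` is `|B|`. -/
theorem stmt19 {𝔽 : Type*} [DivisionRing 𝔽] {n : ℕ} (hn : 0 < n)
    (σ : 𝔽 → Matrix (Fin n) (Fin n) 𝔽) (δ : 𝔽 → Fin n → 𝔽)
    (hσ : IsMatrixMorphism σ) (hδ : IsVectorDerivation σ δ)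
    (S : RawMul 𝔽 n) (hS : HasCommRule S σ δ)
    (G : Finset (Fin n → 𝔽)) :
    vandermondeRank S G G.card = (pRank S (pClosure S ↑G) : Cardinal) ∧
    (∀ B : Finset (Fin n → 𝔽), B ⊆ G →
      (IsPBasis S ↑B (pClosure S ↑G) ↔
        (B.card = pRank S (pClosure S ↑G) ∧
          vandermondeRank S B B.card = (B.card : Cardinal)))) := by
  classical
  have hrank : pRank S (pClosure S ↑G) = Stmt19Aux.fT σ δ G := Stmt19Aux.pRank_eq hσ hδ hS G
  constructor
  · rw [Stmt19Aux.vand_card_eq hσ hδ hS G, hrank]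
  · intro B hBG
    rw [Stmt19Aux.isPBasis_iff_fT hσ hδ hS hBG, hrank, Stmt19Aux.vand_card_eq hσ hδ hS B]
    constructor
    · rintro ⟨h1, h2⟩
      exact ⟨by omega, by rw [h1]⟩
    · rintro ⟨h1, h2⟩
      have h2' : Stmt19Aux.fT σ δ B = B.card := by exact_mod_cast h2
      exact ⟨h2', by omega⟩
end
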